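/- arXiv:2105.11885 — 2 statements merged into one kernel-verified Lean document; each statement's English description precedes it below -/
import Mathlib

section
/- Let P = U⁻¹ P_SM V⁻¹, C = V C_SM U with U, V invertible, and suppose I + C P and I + C_SM P_SM are invertible. Then the input control sensitivity satisfies (I + C P)⁻¹ C = V ((I + C_SM P_SM)⁻¹ C_SM) U. -/
/-- Input control sensitivity transformation: `S_CI = V S_CI^SM U`. -/
theorem input_control_sensitivity_transformation {n : ℕ} {K : Type*} [Field K]
    (P C PSM CSM U V : Matrix (Fin n) (Fin n) K)
    (hU : IsUnit U.det) (hV : IsUnit V.det)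
    (hP : P = U⁻¹ * PSM * V⁻¹) (hC : C = V * CSM * U)
    (h1 : IsUnit (1 + C * P).det) (h2 : IsUnit (1 + CSM * PSM).det) :
    (1 + C * P)⁻¹ * C = V * ((1 + CSM * PSM)⁻¹ * CSM) * U := by
  have key : 1 + C * P = V * (1 + CSM * PSM) * V⁻¹ := by
    subst hP hC
    rw [Matrix.mul_add, Matrix.add_mul, Matrix.mul_one, Matrix.mul_nonsing_inv _ hV]
    congr 1
    have hUU : U * U⁻¹ = 1 := Matrix.mul_nonsing_inv _ hU
    calc V * CSM * U * (U⁻¹ * PSM * V⁻¹)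
        = V * CSM * (U * U⁻¹) * PSM * V⁻¹ := by noncomm_ring
      _ = V * (CSM * PSM) * V⁻¹ := by rw [hUU]; noncomm_ring
  have hinv : (1 + C * P)⁻¹ = V * (1 + CSM * PSM)⁻¹ * V⁻¹ := by
    rw [key, Matrix.mul_inv_rev, Matrix.mul_inv_rev, Matrix.nonsing_inv_nonsing_inv _ hV]
    noncomm_ring
  rw [hinv, hC]
  have hVV : V⁻¹ * V = 1 := Matrix.nonsing_inv_mul _ hV
  calc V * (1 + CSM * PSM)⁻¹ * V⁻¹ * (V * CSM * U)
      = V * (1 + CSM * PSM)⁻¹ * (V⁻¹ * V) * CSM * U := by noncomm_ring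
    _ = V * ((1 + CSM * PSM)⁻¹ * CSM) * U := by rw [hVV]; noncomm_ring
end

section
/- With P = U⁻¹ P_SM V⁻¹, C = V C_SM U, U, V invertible, and I + C P, I + P C, I + C_SM P_SM, I + P_SM C_SM all invertible, the 2×2 block internal-stability matrix [[(I+CP)⁻¹, −C(I+PC)⁻¹],[P(I+CP)⁻¹, −(I+PC)⁻¹]] equals [[V(I+C_SM P_SM)⁻¹V⁻¹, −V C_SM (I+P_SM C_SM)⁻¹ U],[U⁻¹ P_SM (I+C_SM P_SM)⁻¹ V⁻¹, −U⁻¹ (I+P_SM C_SM)⁻¹ U]]. -/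
/-- Transformation of the 2×2 block internal-stability test matrix. -/
theorem internal_stability_matrix_transformation {n : ℕ} {K : Type*} [Field K]
    (P C PSM CSM U V : Matrix (Fin n) (Fin n) K)
    (hU : IsUnit U.det) (hV : IsUnit V.det)
    (hP : P = U⁻¹ * PSM * V⁻¹) (hC : C = V * CSM * U)
    (h1 : IsUnit (1 + C * P).det) (h2 : IsUnit (1 + P * C).det)
    (h3 : IsUnit (1 + CSM * PSM).det) (h4 : IsUnit (1 + PSM * CSM).det) :
    Matrix.fromBlocks
      ((1 + C * P)⁻¹) (-(C * (1 + P * C)⁻¹))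
      (P * (1 + C * P)⁻¹) (-((1 + P * C)⁻¹)) =
    Matrix.fromBlocks
      (V * (1 + CSM * PSM)⁻¹ * V⁻¹) (-(V * CSM * (1 + PSM * CSM)⁻¹ * U))
      (U⁻¹ * PSM * (1 + CSM * PSM)⁻¹ * V⁻¹) (-(U⁻¹ * (1 + PSM * CSM)⁻¹ * U)) := by
  have hUU : U * U⁻¹ = 1 := Matrix.mul_nonsing_inv U hU
  have hUU' : U⁻¹ * U = 1 := Matrix.nonsing_inv_mul U hU
  have hVV : V * V⁻¹ = 1 := Matrix.mul_nonsing_inv V hV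
  have hVV' : V⁻¹ * V = 1 := Matrix.nonsing_inv_mul V hV
  have hCPe : C * P = V * (CSM * PSM) * V⁻¹ := by
    rw [hP, hC, show V * CSM * U * (U⁻¹ * PSM * V⁻¹)
      = V * CSM * (U * U⁻¹) * (PSM * V⁻¹) by noncomm_ring, hUU, Matrix.mul_one]
    noncomm_ring
  have hPCe : P * C = U⁻¹ * (PSM * CSM) * U := by
    rw [hP, hC, show U⁻¹ * PSM * V⁻¹ * (V * CSM * U)
      = U⁻¹ * PSM * (V⁻¹ * V) * (CSM * U) by noncomm_ring, hVV', Matrix.mul_one]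
    noncomm_ring
  have hCP : 1 + C * P = V * (1 + CSM * PSM) * V⁻¹ := by
    rw [hCPe, Matrix.mul_add, Matrix.mul_one, Matrix.add_mul, hVV]
  have hPC : 1 + P * C = U⁻¹ * (1 + PSM * CSM) * U := by
    rw [hPCe, Matrix.mul_add, Matrix.mul_one, Matrix.add_mul, hUU']
  have hCPinv : (1 + C * P)⁻¹ = V * (1 + CSM * PSM)⁻¹ * V⁻¹ := by
    rw [hCP, Matrix.mul_inv_rev, Matrix.mul_inv_rev,
      Matrix.nonsing_inv_nonsing_inv V hV, Matrix.mul_assoc]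
  have hPCinv : (1 + P * C)⁻¹ = U⁻¹ * (1 + PSM * CSM)⁻¹ * U := by
    rw [hPC, Matrix.mul_inv_rev, Matrix.mul_inv_rev,
      Matrix.nonsing_inv_nonsing_inv U hU, Matrix.mul_assoc]
  have eB : C * (1 + P * C)⁻¹ = V * CSM * (1 + PSM * CSM)⁻¹ * U := by
    rw [hPCinv, hC, show V * CSM * U * (U⁻¹ * (1 + PSM * CSM)⁻¹ * U)
      = V * CSM * (U * U⁻¹) * ((1 + PSM * CSM)⁻¹ * U) by noncomm_ring, hUU,
      Matrix.mul_one, ← Matrix.mul_assoc]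
  have eC : P * (1 + C * P)⁻¹ = U⁻¹ * PSM * (1 + CSM * PSM)⁻¹ * V⁻¹ := by
    rw [hCPinv, hP, show U⁻¹ * PSM * V⁻¹ * (V * (1 + CSM * PSM)⁻¹ * V⁻¹)
      = U⁻¹ * PSM * (V⁻¹ * V) * ((1 + CSM * PSM)⁻¹ * V⁻¹) by noncomm_ring, hVV',
      Matrix.mul_one, ← Matrix.mul_assoc]
  rw [eB, eC, hCPinv, hPCinv]
end
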